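/- The ω-language L = {aⁿbⁿ | n ≥ 1} · {a,b}^ω is recognized by a deterministic reachability Parikh automaton but not by any deterministic strong reset Parikh automaton. -/

import Mathlib

/-! Common definitions: semi-linear sets, Parikh automata on finite and infinite words. -/

/-- The linear set with base vector `b` and finite set `P` of period vectors. -/
def LinSet {d : ℕ} {M : Type} [AddCommMonoid M] (b : Fin d → M)
    (P : Finset (Fin d → M)) : Set (Fin d → M) :=
  {v | ∃ z : (Fin d → M) → ℕ, v = b + ∑ p ∈ P, z p • p}

/-- A set is semi-linear if it is a finite union of linear sets. -/
def SemiLin {d : ℕ} {M : Type} [AddCommMonoid M] (S : Set (Fin d → M)) : Prop :=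
  ∃ (n : ℕ) (b : Fin n → Fin d → M) (P : Fin n → Finset (Fin d → M)),
    S = ⋃ i, LinSet (b i) (P i)

/-- The length-`n` prefix of an infinite word. -/
def pref {S : Type} (α : ℕ → S) (n : ℕ) : List S := List.ofFn fun i : Fin n => α i.1

/-- An infinite word is ultimately periodic if it has the form `u v^ω`. -/
def UltimatelyPeriodic {S : Type} (α : ℕ → S) : Prop :=
  ∃ n p, 0 < p ∧ ∀ i, n ≤ i → α (i + p) = α i

/-- The finite infix `α[m+1 : n]` (0-indexed positions `m, …, n-1`). -/
def infixSeg {S : Type} (α : ℕ → S) (m n : ℕ) : List S :=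
  List.ofFn fun j : Fin (n - m) => α (m + j.1)

/-- `W^ω`: infinite concatenations of non-empty words from `W`. -/
def omegaPow {S : Type} (W : Set (List S)) : Set (ℕ → S) :=
  {α | ∃ k : ℕ → ℕ, k 0 = 0 ∧ StrictMono k ∧ ∀ i, infixSeg α (k i) (k (i + 1)) ∈ W}

/-- A deterministic Parikh automaton with states `Q`, alphabet `S`, dimension `d`,
and a constraint set `C` of vectors over `M` (`M = ℕ`, or `M = ℕ∞` for limit PA). -/
structure DetPA (Q S : Type) (d : ℕ) (M : Type) where
  init : Q
  trans : Q → S → (Fin d → ℕ) × Q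
  acc : Q → Prop
  C : Set (Fin d → M)

namespace DetPA

variable {Q S M : Type} {d : ℕ}

/-- The run of `A` from state `p` on the infinite word `α`: state after `i` letters. -/
def run (A : DetPA Q S d M) (p : Q) (α : ℕ → S) : ℕ → Q
  | 0 => p
  | i + 1 => (A.trans (A.run p α i) (α i)).2

/-- The state of the unique run of `A` on `α` after `i` letters. -/
def stateAt (A : DetPA Q S d M) (α : ℕ → S) : ℕ → Q := A.run A.init α

/-- The vector of the `i`-th transition of the unique run of `A` on `α`. -/
def step (A : DetPA Q S d M) (α : ℕ → S) (i : ℕ) : Fin d → ℕ :=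
  (A.trans (A.stateAt α i) (α i)).1

/-- Sum of transition vectors of the run of `A` on `α` on positions `m, …, n-1`. -/
def vecSum (A : DetPA Q S d M) (α : ℕ → S) (m n : ℕ) : Fin d → ℕ :=
  ∑ i ∈ Finset.Ico m n, A.step α i

/-- The state reached when reading a finite word from state `p`. -/
def runList (A : DetPA Q S d M) : Q → List S → Q
  | p, [] => p
  | p, a :: w => A.runList (A.trans p a).2 w

/-- The sum of transition vectors collected when reading a finite word from state `p`. -/
def sumList (A : DetPA Q S d M) : Q → List S → (Fin d → ℕ)
  | _, [] => 0
  | p, a :: w => (A.trans p a).1 + A.sumList (A.trans p a).2 w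

/-- Finite-word acceptance: end in an accepting state with vector sum in `C`. -/
def AcceptsWord (A : DetPA Q S d ℕ) (w : List S) : Prop :=
  A.acc (A.runList A.init w) ∧ A.sumList A.init w ∈ A.C

/-- The run visits accepting states infinitely often. -/
def InfAcc (A : DetPA Q S d M) (α : ℕ → S) : Prop :=
  ∀ n, ∃ i, n ≤ i ∧ A.acc (A.stateAt α i)

/-- Reachability condition. -/
def ReachAccept (A : DetPA Q S d ℕ) (α : ℕ → S) : Prop :=
  ∃ i, 1 ≤ i ∧ A.acc (A.stateAt α i) ∧ A.vecSum α 0 i ∈ A.C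

/-- Reachability-regular condition. -/
def ReachRegAccept (A : DetPA Q S d ℕ) (α : ℕ → S) : Prop :=
  A.ReachAccept α ∧ A.InfAcc α

/-- Büchi condition. -/
def BuchiAccept (A : DetPA Q S d ℕ) (α : ℕ → S) : Prop :=
  ∀ n, ∃ i, n ≤ i ∧ 1 ≤ i ∧ A.acc (A.stateAt α i) ∧ A.vecSum α 0 i ∈ A.C

/-- Weak reset condition. -/
def WeakResetAccept (A : DetPA Q S d ℕ) (α : ℕ → S) : Prop :=
  ∃ k : ℕ → ℕ, k 0 = 0 ∧ StrictMono k ∧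
    (∀ i, A.acc (A.stateAt α (k (i + 1)))) ∧
    (∀ i, A.vecSum α (k i) (k (i + 1)) ∈ A.C)

/-- Strong reset condition: accepting states occur infinitely often, and between any
two consecutive accepting positions (and from position `0` to the first one) the
collected vector lies in `C`. -/
def StrongResetAccept (A : DetPA Q S d ℕ) (α : ℕ → S) : Prop :=
  (∀ n, ∃ i, n ≤ i ∧ 1 ≤ i ∧ A.acc (A.stateAt α i)) ∧
  ∀ m n, m < n → (m = 0 ∨ (1 ≤ m ∧ A.acc (A.stateAt α m))) →
    A.acc (A.stateAt α n) →
    (∀ j, m < j → j < n → ¬ A.acc (A.stateAt α j)) →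
    A.vecSum α m n ∈ A.C

/-- The extended Parikh image of the unique run of `A` on `α`: componentwise the
supremum in `ℕ∞` of the partial sums (`∞` iff the component is incremented
infinitely often, else the finite total sum). -/
noncomputable def limImage (A : DetPA Q S d M) (α : ℕ → S) : Fin d → ℕ∞ :=
  fun j => ⨆ n, (A.vecSum α 0 n j : ℕ∞)

/-- Limit condition. -/
def LimitAccept (A : DetPA Q S d ℕ∞) (α : ℕ → S) : Prop :=
  A.InfAcc α ∧ A.limImage α ∈ A.C

end DetPA

/-- `U` is recognized by a deterministic finite-word Parikh automaton. -/
def DetPARecogFin {S : Type} (U : Set (List S)) : Prop :=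
  ∃ (d : ℕ) (Q : Type) (_ : Finite Q) (A : DetPA Q S d ℕ),
    SemiLin A.C ∧ U = {w | A.AcceptsWord w}

/-- `L` is recognized by a deterministic reachability PA. -/
def DetReachRecog {S : Type} (L : Set (ℕ → S)) : Prop :=
  ∃ (d : ℕ) (Q : Type) (_ : Finite Q) (A : DetPA Q S d ℕ),
    SemiLin A.C ∧ L = {α | A.ReachAccept α}

/-- `L` is recognized by a deterministic reachability-regular PA. -/
def DetReachRegRecog {S : Type} (L : Set (ℕ → S)) : Prop :=
  ∃ (d : ℕ) (Q : Type) (_ : Finite Q) (A : DetPA Q S d ℕ),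
    SemiLin A.C ∧ L = {α | A.ReachRegAccept α}

/-- `L` is recognized by a deterministic Büchi PA. -/
def DetBuchiRecog {S : Type} (L : Set (ℕ → S)) : Prop :=
  ∃ (d : ℕ) (Q : Type) (_ : Finite Q) (A : DetPA Q S d ℕ),
    SemiLin A.C ∧ L = {α | A.BuchiAccept α}

/-- `L` is recognized by a deterministic weak reset PA. -/
def DetWeakResetRecog {S : Type} (L : Set (ℕ → S)) : Prop :=
  ∃ (d : ℕ) (Q : Type) (_ : Finite Q) (A : DetPA Q S d ℕ),
    SemiLin A.C ∧ L = {α | A.WeakResetAccept α}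

/-- `L` is recognized by a deterministic strong reset PA. -/
def DetStrongResetRecog {S : Type} (L : Set (ℕ → S)) : Prop :=
  ∃ (d : ℕ) (Q : Type) (_ : Finite Q) (A : DetPA Q S d ℕ),
    SemiLin A.C ∧ L = {α | A.StrongResetAccept α}

/-- `L` is recognized by a deterministic limit PA (constraint set over `ℕ∞`). -/
def DetLimitRecog {S : Type} (L : Set (ℕ → S)) : Prop :=
  ∃ (d : ℕ) (Q : Type) (_ : Finite Q) (A : DetPA Q S d ℕ∞),
    SemiLin A.C ∧ L = {α | A.LimitAccept α}

/-- A nondeterministic Parikh automaton. -/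
structure NPA (Q S : Type) (d : ℕ) where
  init : Q
  trans : Q → S → (Fin d → ℕ) → Q → Prop
  acc : Q → Prop
  C : Set (Fin d → ℕ)

namespace NPA

variable {Q S : Type} {d : ℕ}

/-- `r, v` form a run of `A` on the infinite word `α`. -/
def IsRun (A : NPA Q S d) (α : ℕ → S) (r : ℕ → Q) (v : ℕ → Fin d → ℕ) : Prop :=
  r 0 = A.init ∧ ∀ i, A.trans (r i) (α i) (v i) (r (i + 1))

/-- Partial sums of the vectors of a run over positions `m, …, n-1`. -/
def partSum (v : ℕ → Fin d → ℕ) (m n : ℕ) : Fin d → ℕ := ∑ i ∈ Finset.Ico m n, v i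

/-- Nondeterministic reachability-regular acceptance. -/
def ReachRegAccept (A : NPA Q S d) (α : ℕ → S) : Prop :=
  ∃ r v, A.IsRun α r v ∧ (∃ i, 1 ≤ i ∧ A.acc (r i) ∧ partSum v 0 i ∈ A.C) ∧
    ∀ n, ∃ i, n ≤ i ∧ A.acc (r i)

/-- Nondeterministic strong reset acceptance. -/
def StrongResetAccept (A : NPA Q S d) (α : ℕ → S) : Prop :=
  ∃ r v, A.IsRun α r v ∧
    (∀ n, ∃ i, n ≤ i ∧ 1 ≤ i ∧ A.acc (r i)) ∧
    ∀ m n, m < n → (m = 0 ∨ (1 ≤ m ∧ A.acc (r m))) → A.acc (r n) →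
      (∀ j, m < j → j < n → ¬ A.acc (r j)) → partSum v m n ∈ A.C

/-- Nondeterministic weak reset acceptance. -/
def WeakResetAccept (A : NPA Q S d) (α : ℕ → S) : Prop :=
  ∃ r v, A.IsRun α r v ∧ ∃ k : ℕ → ℕ, k 0 = 0 ∧ StrictMono k ∧
    (∀ i, A.acc (r (k (i + 1)))) ∧ (∀ i, partSum v (k i) (k (i + 1)) ∈ A.C)

/-- Runs of a nondeterministic PA on a finite word, from state `p` to state `q`
collecting vector sum `v`. -/
def ListRun (A : NPA Q S d) : Q → List S → (Fin d → ℕ) → Q → Prop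
  | p, [], v, q => q = p ∧ v = 0
  | p, a :: w, v, q => ∃ u p', A.trans p a u p' ∧ ∃ v', A.ListRun p' w v' q ∧ v = u + v'

/-- Finite-word acceptance for a nondeterministic PA. -/
def AcceptsWord (A : NPA Q S d) (w : List S) : Prop :=
  ∃ v q, A.ListRun A.init w v q ∧ A.acc q ∧ v ∈ A.C

end NPA

/-- `L` is recognized by a (nondeterministic) reachability-regular PA. -/
def NPAReachRegRecog {S : Type} (L : Set (ℕ → S)) : Prop :=
  ∃ (d : ℕ) (Q : Type) (_ : Finite Q) (A : NPA Q S d),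
    SemiLin A.C ∧ L = {α | A.ReachRegAccept α}

/-- `L` is recognized by a (nondeterministic) strong reset PA. -/
def NPAStrongResetRecog {S : Type} (L : Set (ℕ → S)) : Prop :=
  ∃ (d : ℕ) (Q : Type) (_ : Finite Q) (A : NPA Q S d),
    SemiLin A.C ∧ L = {α | A.StrongResetAccept α}

/-- `L` is recognized by a (nondeterministic) weak reset PA. -/
def NPAWeakResetRecog {S : Type} (L : Set (ℕ → S)) : Prop :=
  ∃ (d : ℕ) (Q : Type) (_ : Finite Q) (A : NPA Q S d),
    SemiLin A.C ∧ L = {α | A.WeakResetAccept α}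

/-- A nondeterministic Büchi automaton. -/
structure NBA (Q S : Type) where
  init : Q
  trans : Q → S → Q → Prop
  acc : Q → Prop

/-- Büchi acceptance. -/
def NBA.Accepts {Q S : Type} (B : NBA Q S) (α : ℕ → S) : Prop :=
  ∃ r : ℕ → Q, r 0 = B.init ∧ (∀ i, B.trans (r i) (α i) (r (i + 1))) ∧
    ∀ n, ∃ i, n ≤ i ∧ B.acc (r i)

/-- `L` is ω-regular: recognized by a nondeterministic Büchi automaton. -/
def OmegaRegular {S : Type} (L : Set (ℕ → S)) : Prop :=
  ∃ (Q : Type) (_ : Finite Q) (B : NBA Q S), L = {α | B.Accepts α}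

/-- The ω-language `{aⁿbⁿ | n ≥ 1} · {a,b}^ω` over `{a,b} = Bool`
(`a := true`, `b := false`). -/
def LanbnPrefix : Set (ℕ → Bool) :=
  {α | ∃ n, 1 ≤ n ∧ (∀ i, i < n → α i = true) ∧ ∀ i, n ≤ i → i < 2 * n → α i = false}
namespace DetPA

variable {Q S M : Type} {d : ℕ}

theorem stateAt_succ (A : DetPA Q S d M) (α : ℕ → S) (i : ℕ) :
    A.stateAt α (i + 1) = (A.trans (A.stateAt α i) (α i)).2 := rfl

theorem step_def (A : DetPA Q S d M) (α : ℕ → S) (i : ℕ) :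
    A.step α i = (A.trans (A.stateAt α i) (α i)).1 := rfl

theorem vecSum_zero_of_le (A : DetPA Q S d M) (α : ℕ → S) {m n : ℕ} (h : n ≤ m) :
    A.vecSum α m n = 0 := by
  simp [vecSum, Finset.Ico_eq_empty (by omega : ¬ m < n)]

theorem vecSum_succ (A : DetPA Q S d M) (α : ℕ → S) {m k : ℕ} (h : m ≤ k) :
    A.vecSum α m (k + 1) = A.vecSum α m k + A.step α k := by
  unfold vecSum; rw [Finset.sum_Ico_succ_top h]

theorem stateAt_congr (A : DetPA Q S d M) {α β : ℕ → S} :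
    ∀ i, (∀ j, j < i → α j = β j) → A.stateAt α i = A.stateAt β i
  | 0, _ => rfl
  | i + 1, h => by
      rw [stateAt_succ, stateAt_succ, stateAt_congr A i (fun j hj => h j (by omega)),
        h i (by omega)]

theorem step_congr (A : DetPA Q S d M) {α β : ℕ → S} (i : ℕ)
    (h : ∀ j, j ≤ i → α j = β j) : A.step α i = A.step β i := by
  rw [step_def, step_def, stateAt_congr A i (fun j hj => h j (by omega)), h i le_rfl]

theorem vecSum_congr (A : DetPA Q S d M) {α β : ℕ → S} (m n : ℕ)
    (h : ∀ j, j < n → α j = β j) : A.vecSum α m n = A.vecSum β m n :=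
  Finset.sum_congr rfl fun i hi =>
    step_congr A i fun j hj => h j (by have := (Finset.mem_Ico.mp hi).2; omega)

theorem stateAt_shift (A : DetPA Q S d M) {α β : ℕ → S} {n m : ℕ}
    (h0 : A.stateAt α n = A.stateAt β m) (h : ∀ j, α (n + j) = β (m + j)) :
    ∀ j, A.stateAt α (n + j) = A.stateAt β (m + j)
  | 0 => h0
  | j + 1 => by
      have ih : A.stateAt α (n + j) = A.stateAt β (m + j) := stateAt_shift A h0 h j
      show A.stateAt α ((n + j) + 1) = A.stateAt β ((m + j) + 1)
      rw [stateAt_succ, stateAt_succ, ih, h j]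

theorem step_shift (A : DetPA Q S d M) {α β : ℕ → S} {n m : ℕ}
    (h0 : A.stateAt α n = A.stateAt β m) (h : ∀ j, α (n + j) = β (m + j)) (j : ℕ) :
    A.step α (n + j) = A.step β (m + j) := by
  rw [step_def, step_def, stateAt_shift A h0 h j, h j]

theorem vecSum_shift (A : DetPA Q S d M) {α β : ℕ → S} {n m : ℕ}
    (h0 : A.stateAt α n = A.stateAt β m) (h : ∀ j, α (n + j) = β (m + j)) (j₁ : ℕ) :
    ∀ j₂, A.vecSum α (n + j₁) (n + j₂) = A.vecSum β (m + j₁) (m + j₂)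
  | 0 => by rw [vecSum_zero_of_le _ _ (by omega), vecSum_zero_of_le _ _ (by omega)]
  | j₂ + 1 => by
      by_cases hj : j₁ ≤ j₂
      · show A.vecSum α (n + j₁) ((n + j₂) + 1) = A.vecSum β (m + j₁) ((m + j₂) + 1)
        rw [vecSum_succ _ _ (by omega), vecSum_succ _ _ (by omega),
          vecSum_shift A h0 h j₁ j₂, step_shift A h0 h j₂]
      · rw [vecSum_zero_of_le _ _ (by omega), vecSum_zero_of_le _ _ (by omega)]

end DetPA

/-- States of the reachability PA for `{aⁿbⁿ}Σ^ω`. -/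
inductive St where
  | qa | qb | dead
deriving DecidableEq

instance : Fintype St := ⟨{.qa, .qb, .dead}, fun x => by cases x <;> simp⟩

/-- The reachability PA for `{aⁿbⁿ}Σ^ω`. -/
def PA1 : DetPA St Bool 2 ℕ where
  init := .qa
  trans := fun q b =>
    match q, b with
    | .qa, true => (![1, 0], .qa)
    | .qa, false => (![0, 1], .qb)
    | .qb, false => (![0, 1], .qb)
    | .qb, true => (0, .dead)
    | .dead, _ => (0, .dead)
  acc := fun q => q = .qb
  C := {v | v 0 = v 1}

/-- The word `aᵐ b^ω`. -/
def bw (m : ℕ) : ℕ → Bool := fun i => decide (i < m)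

/-- The word `aᵖ b^q a^ω`. -/
def xw (p q : ℕ) : ℕ → Bool := fun i => decide (i < p ∨ p + q ≤ i)
theorem PA1_semilin : SemiLin PA1.C := by
  refine ⟨1, fun _ => 0, fun _ => {![1, 1]}, ?_⟩
  ext v
  simp only [Set.mem_iUnion, LinSet, Set.mem_setOf_eq]
  constructor
  · intro hv
    have hv' : v 0 = v 1 := hv
    refine ⟨0, fun _ => v 0, ?_⟩
    rw [Finset.sum_singleton]
    funext j
    fin_cases j <;> simp <;> omega
  · rintro ⟨i, z, rfl⟩
    show _ = _
    rw [Finset.sum_singleton]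
    simp

theorem PA1_lang : LanbnPrefix = {α | PA1.ReachAccept α} := by
  ext α
  simp only [Set.mem_setOf_eq]
  constructor
  · rintro ⟨n, hn1, ha, hb⟩
    have phaseA : ∀ i, i ≤ n → PA1.stateAt α i = .qa ∧ PA1.vecSum α 0 i = ![i, 0] := by
      intro i
      induction i with
      | zero =>
          intro _
          refine ⟨rfl, ?_⟩
          rw [PA1.vecSum_zero_of_le _ le_rfl]
          funext j; fin_cases j <;> simp
      | succ i ih =>
          intro hi
          obtain ⟨hs, hv⟩ := ih (by omega)
          have hα : α i = true := ha i (by omega)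
          constructor
          · rw [DetPA.stateAt_succ, hs, hα]; rfl
          · rw [PA1.vecSum_succ _ (Nat.zero_le i), hv, DetPA.step_def, hs, hα]
            funext j; fin_cases j <;> simp [PA1]
    have phaseB : ∀ k, 1 ≤ k → k ≤ n →
        PA1.stateAt α (n + k) = .qb ∧ PA1.vecSum α 0 (n + k) = ![n, k] := by
      intro k
      induction k with
      | zero => omega
      | succ k ih =>
          intro _ hk
          rcases Nat.eq_zero_or_pos k with hk0 | hk0
          · subst hk0
            obtain ⟨hs, hv⟩ := phaseA n le_rfl
            have hα : α n = false := hb n le_rfl (by omega)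
            constructor
            · rw [DetPA.stateAt_succ, hs, hα]; rfl
            · rw [PA1.vecSum_succ _ (Nat.zero_le n), hv, DetPA.step_def, hs, hα]
              funext j; fin_cases j <;> simp [PA1]
          · obtain ⟨hs, hv⟩ := ih (by omega) (by omega)
            have hα : α (n + k) = false := hb (n + k) (by omega) (by omega)
            constructor
            · rw [show n + (k+1) = (n+k) + 1 from rfl, DetPA.stateAt_succ, hs, hα]; rfl
            · rw [show n + (k+1) = (n+k) + 1 from rfl,
                PA1.vecSum_succ _ (Nat.zero_le (n+k)), hv, DetPA.step_def, hs, hα]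
              funext j; fin_cases j <;> simp [PA1]
    obtain ⟨hs, hv⟩ := phaseB n hn1 le_rfl
    refine ⟨n + n, by omega, ?_, ?_⟩
    · rw [hs]; rfl
    · rw [hv]; show _ = _; simp
  · rintro ⟨i, hi1, hacc, hC⟩
    have inv : ∀ i,
        (PA1.stateAt α i = .qa → (∀ j, j < i → α j = true) ∧ PA1.vecSum α 0 i = ![i, 0]) ∧
        (PA1.stateAt α i = .qb → ∃ m, m < i ∧ (∀ j, j < m → α j = true) ∧
          (∀ j, m ≤ j → j < i → α j = false) ∧ PA1.vecSum α 0 i = ![m, i - m]) := by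
      intro i
      induction i with
      | zero =>
          constructor
          · intro _
            refine ⟨by omega, ?_⟩
            rw [PA1.vecSum_zero_of_le _ le_rfl]
            funext j; fin_cases j <;> simp
          · intro h
            have h0 : PA1.stateAt α 0 = .qa := rfl
            rw [h0] at h; exact absurd h (by decide)
      | succ i ih =>
          cases hs : PA1.stateAt α i with
          | qa =>
              cases hα : α i with
              | true =>
                  have hnext : PA1.stateAt α (i + 1) = .qa := by
                    rw [DetPA.stateAt_succ, hs, hα]; rfl
                  constructor
                  · intro _
                    obtain ⟨hpre, hv⟩ := ih.1 hs
                    refine ⟨fun j hj => ?_, ?_⟩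
                    · rcases Nat.lt_or_ge j i with h | h
                      · exact hpre j h
                      · have : j = i := by omega
                        rw [this]; exact hα
                    · rw [PA1.vecSum_succ _ (Nat.zero_le i), hv, DetPA.step_def, hs, hα]
                      funext j; fin_cases j <;> simp [PA1]
                  · intro h; rw [hnext] at h; exact absurd h (by decide)
              | false =>
                  have hnext : PA1.stateAt α (i + 1) = .qb := by
                    rw [DetPA.stateAt_succ, hs, hα]; rfl
                  constructor
                  · intro h; rw [hnext] at h; exact absurd h (by decide)
                  · intro _
                    obtain ⟨hpre, hv⟩ := ih.1 hs
                    refine ⟨i, by omega, hpre, ?_, ?_⟩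
                    · intro j h1 h2
                      have : j = i := by omega
                      rw [this]; exact hα
                    · rw [PA1.vecSum_succ _ (Nat.zero_le i), hv, DetPA.step_def, hs, hα]
                      funext j; fin_cases j <;> simp [PA1]
          | qb =>
              cases hα : α i with
              | true =>
                  have hnext : PA1.stateAt α (i + 1) = .dead := by
                    rw [DetPA.stateAt_succ, hs, hα]; rfl
                  constructor
                  · intro h; rw [hnext] at h; exact absurd h (by decide)
                  · intro h; rw [hnext] at h; exact absurd h (by decide)
              | false =>
                  have hnext : PA1.stateAt α (i + 1) = .qb := by
                    rw [DetPA.stateAt_succ, hs, hα]; rfl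
                  constructor
                  · intro h; rw [hnext] at h; exact absurd h (by decide)
                  · intro _
                    obtain ⟨m, hm, hpre, hbs, hv⟩ := ih.2 hs
                    refine ⟨m, by omega, hpre, ?_, ?_⟩
                    · intro j h1 h2
                      rcases Nat.lt_or_ge j i with h | h
                      · exact hbs j h1 h
                      · have : j = i := by omega
                        rw [this]; exact hα
                    · rw [PA1.vecSum_succ _ (Nat.zero_le i), hv, DetPA.step_def, hs, hα]
                      funext j; fin_cases j <;> simp [PA1] <;> omega
          | dead =>
              have hnext : PA1.stateAt α (i + 1) = .dead := by
                cases hα : α i <;> (rw [DetPA.stateAt_succ, hs, hα]; rfl)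
              constructor
              · intro h; rw [hnext] at h; exact absurd h (by decide)
              · intro h; rw [hnext] at h; exact absurd h (by decide)
    obtain ⟨m, hm, hpre, hbs, hv⟩ := (inv i).2 hacc
    rw [hv] at hC
    have hC' : m = i - m := hC
    refine ⟨m, by omega, hpre, fun j h1 h2 => hbs j h1 (by omega)⟩

/-- `{aⁿbⁿ | n ≥ 1}·{a,b}^ω` is deterministic reachability PA recognizable
but not deterministic strong reset PA recognizable. -/
theorem detReach_not_detStrongReset :
    DetReachRecog LanbnPrefix ∧ ¬ DetStrongResetRecog LanbnPrefix := by
  constructor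
  · exact ⟨2, St, inferInstance, PA1, PA1_semilin, PA1_lang⟩
  rintro ⟨d, Q, hQ, A, -, hL⟩
  classical
  haveI := hQ
  set aω : ℕ → Bool := fun _ => true with haω
  have haωtrue : ∀ i, aω i = true := fun _ => rfl
  have haωL : aω ∉ LanbnPrefix := by
    rintro ⟨n, hn, -, hb⟩
    have := hb n le_rfl (by omega)
    simp [haω] at this
  -- membership facts for bw
  have hbwL : ∀ m, 1 ≤ m → bw m ∈ LanbnPrefix := by
    intro m hm
    refine ⟨m, hm, fun i hi => by simp [bw, hi], fun i h1 h2 => by simp [bw]; omega⟩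
  -- prefix agreement for bw words
  have hbwpre : ∀ (m i : ℕ), i ≤ m → A.stateAt (bw m) i = A.stateAt aω i := by
    intro m i hi
    exact DetPA.stateAt_congr A i fun j hj => by simp [bw, haω]; omega
  by_cases hfin : ∃ N, ∀ i, N ≤ i → ¬ A.acc (A.stateAt aω i)
  case neg =>
    push_neg at hfin
    by_cases hall : ∀ m n, m < n → (m = 0 ∨ (1 ≤ m ∧ A.acc (A.stateAt aω m))) →
        A.acc (A.stateAt aω n) →
        (∀ j, m < j → j < n → ¬ A.acc (A.stateAt aω j)) → A.vecSum aω m n ∈ A.C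
    · apply haωL
      rw [hL]
      refine ⟨fun n => ?_, hall⟩
      obtain ⟨i, hi, hacc⟩ := hfin (max n 1)
      exact ⟨i, by omega, by omega, hacc⟩
    · push_neg at hall
      obtain ⟨m, n, hmn, hm, hn, hgap, hnC⟩ := hall
      have hβL : bw n ∈ LanbnPrefix := hbwL n (by omega)
      rw [hL] at hβL
      have hβacc : A.StrongResetAccept (bw n) := hβL
      apply hnC
      have hsum : A.vecSum aω m n = A.vecSum (bw n) m n :=
        DetPA.vecSum_congr A m n fun j hj => by simp [bw, haω]; omega
      rw [hsum]
      refine hβacc.2 m n hmn ?_ ?_ ?_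
      · rcases hm with h | ⟨h1, h2⟩
        · exact Or.inl h
        · exact Or.inr ⟨h1, by rwa [hbwpre n m (by omega)]⟩
      · rwa [hbwpre n n le_rfl]
      · intro j h1 h2 hc
        rw [hbwpre n j (by omega)] at hc
        exact hgap j h1 h2 hc
  case pos =>
    obtain ⟨N, hN⟩ := hfin
    -- eventual periodicity of the run on a^ω
    obtain ⟨a, b, hab, hr⟩ := Finite.exists_ne_map_eq_of_infinite (A.stateAt aω)
    obtain ⟨s, t, hst, hrst⟩ : ∃ s t, s < t ∧ A.stateAt aω s = A.stateAt aω t := by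
      rcases Nat.lt_or_ge a b with h | h
      · exact ⟨a, b, h, hr⟩
      · exact ⟨b, a, by omega, hr.symm⟩
    set ρ := t - s with hρdef
    have hρ : 0 < ρ := by omega
    have hper : ∀ i, s ≤ i → A.stateAt aω (i + ρ) = A.stateAt aω i := by
      intro i hi
      have h := DetPA.stateAt_shift A (α := aω) (β := aω) (n := t) (m := s)
        hrst.symm (fun j => rfl) (i - s)
      rw [show t + (i - s) = i + ρ by omega, show s + (i - s) = i by omega] at h
      exact h
    set n₀ := max (max s N) 1 with hn₀def
    have hn₀1 : 1 ≤ n₀ := by omega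
    have hn₀N : N ≤ n₀ := by omega
    have hn₀s : s ≤ n₀ := by omega
    have hpern : ∀ k, A.stateAt aω (n₀ + k * ρ) = A.stateAt aω n₀ := by
      intro k
      induction k with
      | zero => simp
      | succ k ih =>
          rw [show n₀ + (k + 1) * ρ = (n₀ + k * ρ) + ρ by ring, hper _ (by omega), ih]
    -- w: first accepting position of bw n₀ beyond n₀
    have hβ₀acc : A.StrongResetAccept (bw n₀) := by
      have := hbwL n₀ hn₀1; rwa [hL] at this
    have hex : ∃ i, n₀ < i ∧ A.acc (A.stateAt (bw n₀) i) := by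
      obtain ⟨i, hi, -, hacc⟩ := hβ₀acc.1 (n₀ + 1)
      exact ⟨i, by omega, hacc⟩
    set w := Nat.find hex with hwdef
    obtain ⟨hwgt, hwacc⟩ := Nat.find_spec hex
    have hwmin : ∀ j, n₀ < j → j < w → ¬ A.acc (A.stateAt (bw n₀) j) := by
      intro j h1 h2 hc
      exact Nat.find_min hex h2 ⟨h1, hc⟩
    -- the pumping parameters
    have hwρ : w ≤ w * ρ := Nat.le_mul_of_pos_right w hρ
    set n := n₀ + w * ρ with hndef
    have hn1 : 1 ≤ n := by omega
    have hnn₀ : n₀ ≤ n := by omega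
    have hrn : A.stateAt aω n = A.stateAt aω n₀ := hpern w
    have hrnρ : A.stateAt aω (n + ρ) = A.stateAt aω n := hper n (by omega)
    set W := n + (w - n₀) with hWdef
    have hWn : n < W := by omega
    have hW2n : W ≤ 2 * n := by omega
    -- u : last accepting position on the pure a-run
    set u := Nat.findGreatest (fun i => A.acc (A.stateAt aω i)) N with hudef
    obtain ⟨huN, huP, humaxN⟩ := Nat.findGreatest_eq_iff.mp hudef.symm
    have humax : ∀ j, u < j → ¬ A.acc (A.stateAt aω j) := by
      intro j hj
      by_cases hjN : j ≤ N
      · exact humaxN hj hjN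
      · exact hN j (by omega)
    -- shift between bw n and bw n₀
    have hβsh0 : A.stateAt (bw n) n = A.stateAt (bw n₀) n₀ := by
      rw [hbwpre n n le_rfl, hbwpre n₀ n₀ le_rfl, hrn]
    have hβlet : ∀ j, bw n (n + j) = bw n₀ (n₀ + j) := by
      intro j; simp only [bw, decide_eq_decide]; omega
    have hβshift : ∀ j, A.stateAt (bw n) (n + j) = A.stateAt (bw n₀) (n₀ + j) :=
      DetPA.stateAt_shift A hβsh0 hβlet
    -- ξ = a^n b^n a^ω
    have hξL : xw n n ∈ LanbnPrefix := by
      refine ⟨n, hn1, fun i hi => by simp [xw]; omega, fun i h1 h2 => by simp [xw]; omega⟩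
    rw [hL] at hξL
    have hξacc : A.StrongResetAccept (xw n n) := hξL
    have hξβ : ∀ j, j < 2 * n → xw n n j = bw n j := by
      intro j hj; simp only [xw, bw, decide_eq_decide]; omega
    have hξstate : ∀ i, i ≤ 2 * n → A.stateAt (xw n n) i = A.stateAt (bw n) i :=
      fun i hi => DetPA.stateAt_congr A i fun j hj => hξβ j (by omega)
    -- the accepting position W for ξ
    have hWaccξ : A.acc (A.stateAt (xw n n) W) := by
      rw [hξstate W hW2n]
      have h2 := hβshift (w - n₀)
      rw [show n₀ + (w - n₀) = w by omega] at h2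
      rw [← hWdef] at h2
      rw [h2]; exact hwacc
    -- ξ' = a^(n+ρ) b^n a^ω  — not in the language
    have hξ'notL : xw (n + ρ) n ∉ LanbnPrefix := by
      rintro ⟨m, hm1, hma, hmb⟩
      rcases Nat.lt_trichotomy m (n + ρ) with h | h | h
      · have := hmb m le_rfl (by omega)
        simp only [xw, decide_eq_false_iff_not] at this
        omega
      · have := hmb (2 * n + ρ) (by omega) (by omega)
        simp only [xw, decide_eq_false_iff_not] at this
        omega
      · have := hma (n + ρ) (by omega)
        simp only [xw, decide_eq_true_eq] at this
        omega
    -- prefix agreement for ξ' and β' = bw (n+ρ)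
    have hξ'pre : ∀ i, i ≤ n + ρ → A.stateAt (xw (n + ρ) n) i = A.stateAt aω i := by
      intro i hi
      exact DetPA.stateAt_congr A i fun j hj => by simp [xw, haω]; omega
    have hβ'pre : ∀ i, i ≤ n + ρ → A.stateAt (bw (n + ρ)) i = A.stateAt aω i :=
      hbwpre (n + ρ)
    -- shift between ξ' and ξ
    have hξ'sh0 : A.stateAt (xw (n + ρ) n) (n + ρ) = A.stateAt (xw n n) n := by
      rw [hξ'pre (n + ρ) le_rfl, hrnρ, hξstate n (by omega), hbwpre n n le_rfl]
    have hξ'let : ∀ j, xw (n + ρ) n ((n + ρ) + j) = xw n n (n + j) := by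
      intro j; simp only [xw, decide_eq_decide]; omega
    have hξ'shift : ∀ j, A.stateAt (xw (n + ρ) n) ((n + ρ) + j) = A.stateAt (xw n n) (n + j) :=
      DetPA.stateAt_shift A hξ'sh0 hξ'let
    have hξ'vecsh : ∀ j₁ j₂, A.vecSum (xw (n + ρ) n) ((n + ρ) + j₁) ((n + ρ) + j₂)
        = A.vecSum (xw n n) (n + j₁) (n + j₂) :=
      fun j₁ j₂ => DetPA.vecSum_shift A hξ'sh0 hξ'let j₁ j₂
    -- shift between β' and β
    have hβ'sh0 : A.stateAt (bw (n + ρ)) (n + ρ) = A.stateAt (bw n) n := by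
      rw [hβ'pre (n + ρ) le_rfl, hrnρ, hbwpre n n le_rfl]
    have hβ'let : ∀ j, bw (n + ρ) ((n + ρ) + j) = bw n (n + j) := by
      intro j; simp only [bw, decide_eq_decide]; omega
    have hβ'shift : ∀ j, A.stateAt (bw (n + ρ)) ((n + ρ) + j) = A.stateAt (bw n) (n + j) :=
      DetPA.stateAt_shift A hβ'sh0 hβ'let
    -- β' is accepted
    have hβ'acc : A.StrongResetAccept (bw (n + ρ)) := by
      have := hbwL (n + ρ) (by omega); rwa [hL] at this
    -- the accepting position W + ρ for ξ'
    have hWaccξ' : A.acc (A.stateAt (xw (n + ρ) n) (W + ρ)) := by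
      have h := hξ'shift (W - n)
      rw [show (n + ρ) + (W - n) = W + ρ by omega, show n + (W - n) = W by omega] at h
      rw [h]; exact hWaccξ
    -- classification of accepting positions of ξ'
    have hclass : ∀ i, 1 ≤ i → A.acc (A.stateAt (xw (n + ρ) n) i) →
        i ≤ u ∨ W + ρ ≤ i := by
      intro i hi1 hacc
      by_cases hle : i ≤ n + ρ
      · left
        by_contra hui
        exact humax i (by omega) (by rwa [hξ'pre i hle] at hacc)
      · right
        push_neg at hle
        by_contra hWi
        push_neg at hWi
        have hsh := hξ'shift (i - (n + ρ))
        rw [show (n + ρ) + (i - (n + ρ)) = i by omega] at hsh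
        rw [hsh, hξstate _ (by omega), hβshift (i - (n + ρ))] at hacc
        exact hwmin (n₀ + (i - (n + ρ))) (by omega) (by omega) hacc
    -- ξ' is accepted: contradiction
    apply hξ'notL
    rw [hL]
    refine ⟨?_, ?_⟩
    · -- infinitely many accepting positions
      intro N'
      obtain ⟨i, hi, hi1, hacc⟩ := hξacc.1 (max N' n)
      have h := hξ'shift (i - n)
      rw [show (n + ρ) + (i - n) = i + ρ by omega, show n + (i - n) = i by omega] at h
      exact ⟨i + ρ, by omega, by omega, by rw [h]; exact hacc⟩
    · intro m' n' hmn' hm' hn' hgap'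
      rcases hclass n' (by omega) hn' with hn'u | hn'W
      · -- early segment: transfer to ξ
        have htrans : ∀ i, i ≤ n' → A.stateAt (xw (n + ρ) n) i = A.stateAt (xw n n) i := by
          intro i hi
          rw [hξ'pre i (by omega), hξstate i (by omega), hbwpre n i (by omega)]
        have h1 : A.vecSum (xw (n + ρ) n) m' n' = A.vecSum (xw n n) m' n' := by
          apply DetPA.vecSum_congr
          intro j hj
          simp only [xw, decide_eq_decide]; omega
        rw [h1]
        refine hξacc.2 m' n' hmn' ?_ ?_ ?_
        · rcases hm' with h | ⟨h1', h2'⟩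
          · exact Or.inl h
          · exact Or.inr ⟨h1', by rwa [← htrans m' (by omega)]⟩
        · rwa [← htrans n' le_rfl]
        · intro j hj1 hj2 hc
          refine hgap' j hj1 hj2 ?_
          rwa [htrans j (by omega)]
      · -- n' ≥ W + ρ
        have hm'u : m' = u ∨ (W + ρ ≤ m' ∧ 1 ≤ m') := by
          rcases hm' with rfl | ⟨h1', h2'⟩
          · left
            rcases Nat.eq_zero_or_pos u with h0 | h0
            · omega
            · exfalso
              refine hgap' u (by omega) (by omega) ?_
              rw [hξ'pre u (by omega)]
              exact huP (by omega)
          · rcases hclass m' h1' h2' with hmu | hmW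
            · left
              rcases Nat.lt_or_ge m' u with hlt | hge
              · exfalso
                refine hgap' u (by omega) (by omega) ?_
                rw [hξ'pre u (by omega)]
                exact huP (by omega)
              · omega
            · exact Or.inr ⟨hmW, h1'⟩
        rcases hm'u with hequ | ⟨hmW, hm1⟩
        · -- crossing segment
          subst hequ
          have hn'eq : n' = W + ρ := by
            by_contra hne
            exact hgap' (W + ρ) (by omega) (by omega) hWaccξ'
          subst hn'eq
          -- compare with bw (n+ρ)
          have hsum : A.vecSum (xw (n + ρ) n) u (W + ρ) = A.vecSum (bw (n + ρ)) u (W + ρ) := by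
            apply Finset.sum_congr rfl
            intro i hi
            rw [Finset.mem_Ico] at hi
            by_cases hle : i < n + ρ
            · apply DetPA.step_congr
              intro j hj
              simp only [xw, bw, decide_eq_decide]; omega
            · push_neg at hle
              have h1 := DetPA.step_shift A hξ'sh0 hξ'let (i - (n + ρ))
              have h2 := DetPA.step_shift A hβ'sh0 hβ'let (i - (n + ρ))
              rw [show (n + ρ) + (i - (n + ρ)) = i by omega] at h1 h2
              rw [h1, h2]
              apply DetPA.step_congr
              intro j hj
              exact hξβ j (by omega)
          rw [hsum]
          refine hβ'acc.2 u (W + ρ) (by omega) ?_ ?_ ?_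
          · rcases Nat.eq_zero_or_pos u with h0 | h0
            · exact Or.inl h0
            · exact Or.inr ⟨h0, by rw [hβ'pre u (by omega)]; exact huP (by omega)⟩
          · have h1 := hβ'shift (W - n)
            rw [show (n + ρ) + (W - n) = W + ρ by omega, show n + (W - n) = W by omega] at h1
            rw [h1]
            have h2 := hβshift (w - n₀)
            rw [show n₀ + (w - n₀) = w by omega] at h2
            rw [← hWdef] at h2
            rw [h2]; exact hwacc
          · intro j hj1 hj2 hc
            by_cases hle : j ≤ n + ρ
            · rw [hβ'pre j hle] at hc
              exact humax j (by omega) hc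
            · push_neg at hle
              have h1 := hβ'shift (j - (n + ρ))
              rw [show (n + ρ) + (j - (n + ρ)) = j by omega] at h1
              rw [h1, hβshift (j - (n + ρ))] at hc
              exact hwmin (n₀ + (j - (n + ρ))) (by omega) (by omega) hc
        · -- tail segment: transfer to ξ
          have hv := hξ'vecsh (m' - (n + ρ)) (n' - (n + ρ))
          rw [show (n + ρ) + (m' - (n + ρ)) = m' by omega,
            show (n + ρ) + (n' - (n + ρ)) = n' by omega] at hv
          rw [hv]
          have hshm := hξ'shift (m' - (n + ρ))
          rw [show (n + ρ) + (m' - (n + ρ)) = m' by omega] at hshm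
          have hshn := hξ'shift (n' - (n + ρ))
          rw [show (n + ρ) + (n' - (n + ρ)) = n' by omega] at hshn
          refine hξacc.2 (n + (m' - (n + ρ))) (n + (n' - (n + ρ))) (by omega) ?_ ?_ ?_
          · refine Or.inr ⟨by omega, ?_⟩
            rw [← hshm]
            rcases hm' with h | ⟨-, h2'⟩
            · omega
            · exact h2'
          · rw [← hshn]; exact hn'
          · intro j hj1 hj2 hc
            have hj := hξ'shift (j - n)
            rw [show n + (j - n) = j by omega] at hj
            refine hgap' ((n + ρ) + (j - n)) (by omega) (by omega) ?_
            rw [hj]; exact hc
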